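/- Let a = 2cos(π/7), so that a³ = a² + 2a − 1, and let β = a² + a. Then the 2 × 2 matrix [[1, a], [a, a² + 1]] has β as an eigenvalue with eigenvector (1, a² − 1), its other eigenvalue is 2 − a, and (2 − a) = β⁻¹; moreover β is a Pisot number whose minimal polynomial over ℚ is x³ − 6x² + 5x − 1. -/

import Mathlib

open Polynomial

/-- A Pisot number: a real algebraic integer `β > 1` all of whose Galois conjugates
(the other complex roots of its minimal polynomial over `ℚ`) have modulus `< 1`. -/
def IsPisot (β : ℝ) : Prop :=
  1 < β ∧ IsIntegral ℤ β ∧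
    ∀ z : ℂ, z ≠ (β : ℂ) → Polynomial.aeval z (minpoly ℚ β) = 0 → ‖z‖ < 1

/-- `a = 2 cos (π/7)`. -/
noncomputable def a7 : ℝ := 2 * Real.cos (Real.pi / 7)

/-- `β = a² + a`. -/
noncomputable def b7 : ℝ := a7 ^ 2 + a7

/-- The matrix `[[1, a], [a, a² + 1]]`. -/
noncomputable def M7 : Matrix (Fin 2) (Fin 2) ℝ := !![1, a7; a7, a7 ^ 2 + 1]

lemma cos7_gt : Real.cos (Real.pi / 7) > 1/2 := by
  rw [← Real.cos_pi_div_three]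
  apply Real.cos_lt_cos_of_nonneg_of_le_pi
  · positivity
  · linarith [Real.pi_pos]
  · linarith [Real.pi_pos]

lemma a7_cubic : a7 ^ 3 = a7 ^ 2 + 2 * a7 - 1 := by
  set c := Real.cos (Real.pi / 7) with hc
  have h4 : Real.cos (4 * (Real.pi/7)) = - Real.cos (3 * (Real.pi/7)) := by
    rw [show (4:ℝ) * (Real.pi/7) = Real.pi - 3*(Real.pi/7) by ring, Real.cos_pi_sub]
  have e4 : Real.cos (4 * (Real.pi/7)) = 2*(2*c^2-1)^2 - 1 := by
    rw [show (4:ℝ)*(Real.pi/7) = 2*(2*(Real.pi/7)) by ring, Real.cos_two_mul,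
      Real.cos_two_mul]
  have e3 : Real.cos (3 * (Real.pi/7)) = 4*c^3 - 3*c := Real.cos_three_mul _
  have hq : (c+1) * (8*c^3 - 4*c^2 - 4*c + 1) = 0 := by
    rw [e4, e3] at h4; linear_combination h4
  have hc2 : c > 1/2 := cos7_gt
  have h0 : 8*c^3 - 4*c^2 - 4*c + 1 = 0 := by
    rcases mul_eq_zero.1 hq with h | h
    · linarith
    · exact h
  unfold a7
  linear_combination h0

lemma a7_gt_one : 1 < a7 := by
  have := cos7_gt; unfold a7; linarith

lemma b7_cubic : b7 ^ 3 = 6 * b7 ^ 2 - 5 * b7 + 1 := by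
  unfold b7; linear_combination (a7^3 + 4*a7^2 + 3*a7 - 1) * a7_cubic

lemma b7_gt : 2 < b7 := by
  have := a7_gt_one; unfold b7; nlinarith

lemma b7_lb : 5.04 < b7 := by
  have h := b7_cubic
  have h2 := b7_gt
  nlinarith [sq_nonneg (b7 - 5.05), sq_nonneg (b7 - 2), mul_pos (sub_pos.2 h2) (sub_pos.2 h2)]

lemma b7_ub : b7 < 5.05 := by
  have h := b7_cubic
  have h2 := b7_gt
  nlinarith [sq_nonneg (b7 - 5.05), sq_nonneg (b7 - 2)]

lemma eig1 : M7.mulVec ![1, a7 ^ 2 - 1] = b7 • ![1, a7 ^ 2 - 1] := by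
  have h := a7_cubic
  funext i
  fin_cases i <;>
    simp [M7, b7, Matrix.mulVec, dotProduct, Fin.sum_univ_two] <;>
    nlinarith [h]

lemma eig2 : M7.mulVec ![a7, 1 - a7] = (2 - a7) • ![a7, 1 - a7] := by
  have h := a7_cubic
  funext i
  fin_cases i <;>
    simp [M7, Matrix.mulVec, dotProduct, Fin.sum_univ_two] <;>
    nlinarith [h]

lemma inv_eq7 : 2 - a7 = b7⁻¹ := by
  apply eq_inv_of_mul_eq_one_left
  unfold b7; linear_combination - a7_cubic

noncomputable def pQ7 : ℚ[X] := X ^ 3 - 6 * X ^ 2 + 5 * X - 1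
noncomputable def pZ7 : ℤ[X] := X ^ 3 - 6 * X ^ 2 + 5 * X - 1

lemma pQ7_monic : pQ7.Monic := by unfold pQ7; monicity!
lemma pZ7_monic : pZ7.Monic := by unfold pZ7; monicity!

lemma pQ7_natDegree : pQ7.natDegree = 3 := by unfold pQ7; compute_degree!

lemma pZ7_map : pZ7.map (algebraMap ℤ ℚ) = pQ7 := by
  unfold pZ7 pQ7
  simp [Polynomial.map_sub, Polynomial.map_add, Polynomial.map_pow, Polynomial.map_mul,
    Polynomial.map_ofNat]

lemma pQ7_no_roots : pQ7.roots = 0 := by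
  rw [Multiset.eq_zero_iff_forall_notMem]
  intro r hr
  rw [mem_roots (pQ7_monic.ne_zero)] at hr
  have haev : aeval r pZ7 = 0 := by
    rw [aeval_def, ← eval_map, pZ7_map]
    exact hr
  obtain ⟨r', hr', hdvd⟩ := exists_integer_of_is_root_of_monic pZ7_monic haev
  have hc0 : pZ7.coeff 0 = -1 := by unfold pZ7; simp
  rw [hc0] at hdvd
  have : IsUnit r' := isUnit_of_dvd_unit hdvd (by exact (isUnit_one.neg))
  rw [hr'] at haev
  unfold pZ7 at haev
  rcases Int.isUnit_iff.1 this with h | h <;> subst h <;> norm_num [map_ofNat] at haev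

lemma pQ7_irred : Irreducible pQ7 := by
  rw [irreducible_iff_roots_eq_zero_of_degree_le_three] <;>
    simp [pQ7_no_roots, pQ7_natDegree]

lemma pQ7_root : aeval b7 pQ7 = 0 := by
  unfold pQ7
  simp only [map_sub, map_add, map_mul, map_pow, aeval_X, map_ofNat, aeval_one, map_one]
  linear_combination b7_cubic

lemma minpoly_b7 : minpoly ℚ b7 = X ^ 3 - 6 * X ^ 2 + 5 * X - 1 :=
  (minpoly.eq_of_irreducible_of_monic pQ7_irred pQ7_root pQ7_monic).symm

lemma b7_integral : IsIntegral ℤ b7 := by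
  refine ⟨pZ7, pZ7_monic, ?_⟩
  rw [← aeval_def]
  unfold pZ7
  simp only [map_sub, map_add, map_mul, map_pow, aeval_X, map_ofNat, map_one]
  linear_combination b7_cubic

lemma conj_small (z : ℂ) (hz : z ≠ (b7 : ℂ))
    (h0 : Polynomial.aeval z (minpoly ℚ b7) = 0) : ‖z‖ < 1 := by
  have hb1 := b7_lb
  have hb2 := b7_ub
  have hcu := b7_cubic
  set b := b7 with hb
  have hDpos : (0:ℝ) < (6 - b)^2 - 4*(b^2 - 6*b + 5) := by nlinarith
  set s : ℝ := Real.sqrt ((6 - b)^2 - 4*(b^2 - 6*b + 5)) with hs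
  have hsq : s ^ 2 = (6 - b)^2 - 4*(b^2 - 6*b + 5) := Real.sq_sqrt hDpos.le
  have hs_nonneg : 0 ≤ s := Real.sqrt_nonneg _
  have hs_lt1 : s < b - 4 := by nlinarith [hsq]
  have hs_lt2 : s < 6 - b := by nlinarith [hsq]
  set r1 : ℝ := ((6 - b) + s) / 2 with hr1
  set r2 : ℝ := ((6 - b) - s) / 2 with hr2
  have hr1_lt1 : r1 < 1 := by rw [hr1]; linarith
  have hr2_pos : 0 < r2 := by rw [hr2]; linarith
  have hr2_le : r2 ≤ r1 := by rw [hr1, hr2]; linarith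
  have h6 : b + r1 + r2 = 6 := by rw [hr1, hr2]; ring
  have h5 : b*r1 + b*r2 + r1*r2 = 5 := by
    rw [hr1, hr2]; linear_combination (-1/4 : ℝ) * hsq
  have h1 : b * r1 * r2 = 1 := by
    rw [hr1, hr2]; linear_combination (-b/4 : ℝ) * hsq + hcu
  rw [minpoly_b7] at h0
  simp only [map_sub, map_add, map_mul, map_pow, aeval_X, map_ofNat, map_one] at h0
  have c6 : ((b:ℂ) + r1 + r2) = 6 := by exact_mod_cast congrArg (Complex.ofReal) h6
  have c5 : ((b:ℂ)*r1 + (b:ℂ)*r2 + (r1:ℂ)*r2) = 5 := by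
    exact_mod_cast congrArg (Complex.ofReal) h5
  have c1 : ((b:ℂ) * r1 * r2) = 1 := by exact_mod_cast congrArg (Complex.ofReal) h1
  have hfac : (z - b) * (z - r1) * (z - r2) = 0 := by
    linear_combination h0 - z^2*c6 + z*c5 - c1
  rcases mul_eq_zero.1 hfac with h | h
  · rcases mul_eq_zero.1 h with h' | h'
    · exact absurd (sub_eq_zero.1 h') hz
    · have hz1 : z = (r1 : ℂ) := sub_eq_zero.1 h'
      rw [hz1, Complex.norm_real, Real.norm_eq_abs, abs_lt]
      constructor <;> linarith
  · have hz2 : z = (r2 : ℂ) := sub_eq_zero.1 h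
    rw [hz2, Complex.norm_real, Real.norm_eq_abs, abs_lt]
    constructor <;> linarith

theorem stmt_16 :
    a7 ^ 3 = a7 ^ 2 + 2 * a7 - 1 ∧
    M7.mulVec ![1, a7 ^ 2 - 1] = b7 • ![1, a7 ^ 2 - 1] ∧
    (∃ w : Fin 2 → ℝ, w ≠ 0 ∧ M7.mulVec w = (2 - a7) • w) ∧
    2 - a7 = b7⁻¹ ∧
    IsPisot b7 ∧
    minpoly ℚ b7 = X ^ 3 - 6 * X ^ 2 + 5 * X - 1 := by
  refine ⟨a7_cubic, eig1, ⟨![a7, 1 - a7], ?_, eig2⟩, inv_eq7, ⟨?_, b7_integral, conj_small⟩,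
    minpoly_b7⟩
  · intro h
    have h0 : a7 = 0 := by
      have := congrFun h 0
      simpa using this
    have := a7_gt_one
    linarith
  · have := b7_gt; linarith
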